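/- Let (k₁, k₂, k₃) = (2, 2, 2) and w = (0, 0, 0, (1/2)·x⁻¹, −(1/2)·x⁻², x⁻³) (components in the order (a₁₂, a₁₃, a₂₃, b₁, b₂, b₃)). Then E″(w) ∈ B, F″(w) ∈ B, w ∉ B, and every z ∈ V with E″(z) ∈ B and F″(z) ∈ B satisfies z ∈ ℂ·w + B. In other words, the 𝔰″-invariant part of H¹(ℂℙ¹, T₂) is one-dimensional, spanned by the class of w. -/

import Mathlib

noncomputable section

open LaurentPolynomial

/-- `L = ℂ[x, x⁻¹]`, the Laurent polynomials over `ℂ`. -/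
abbrev L : Type := LaurentPolynomial ℂ

/-- The coefficient of `x^n` in a Laurent polynomial. -/
def coeffL (p : L) (n : ℤ) : ℂ := (AddMonoidAlgebra.coeff p : ℤ →₀ ℂ) n

lemma coeffL_zero (n : ℤ) : coeffL 0 n = 0 := rfl

lemma coeffL_add (a b : L) (n : ℤ) : coeffL (a + b) n = coeffL a n + coeffL b n := by
  unfold coeffL; simp

lemma coeffL_smul (c : ℂ) (a : L) (n : ℤ) : coeffL (c • a) n = c * coeffL a n := by
  unfold coeffL; simp

/-- `L₊`: Laurent polynomials involving only nonnegative powers of `x`. -/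
def Lplus : Submodule ℂ L where
  carrier := {p | ∀ n : ℤ, n < 0 → coeffL p n = 0}
  zero_mem' := fun n _ => coeffL_zero n
  add_mem' := by intro a b ha hb n hn; rw [coeffL_add, ha n hn, hb n hn, add_zero]
  smul_mem' := by intro c p hp n hn; rw [coeffL_smul, hp n hn, mul_zero]

/-- `L₋`: Laurent polynomials involving only nonpositive powers of `x`. -/
def Lminus : Submodule ℂ L where
  carrier := {p | ∀ n : ℤ, 0 < n → coeffL p n = 0}
  zero_mem' := fun n _ => coeffL_zero n
  add_mem' := by intro a b ha hb n hn; rw [coeffL_add, ha n hn, hb n hn, add_zero]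
  smul_mem' := by intro c p hp n hn; rw [coeffL_smul, hp n hn, mul_zero]

/-- The derivative `d/dx` on Laurent polynomials. -/
def D (p : L) : L := Finsupp.sum (AddMonoidAlgebra.coeff p : ℤ →₀ ℂ) fun n a => ((n : ℂ) * a) • T (n - 1)

/-- `V = L⁶`, the model of Čech 1-cochains with values in `T₂`: a tuple
`v = (a₁₂, a₁₃, a₂₃, b₁, b₂, b₃)` (components `v 0, …, v 5`) encodes the
vector field `Σ_{i<j} a_{ij}(x)ξᵢξⱼ∂/∂x + Σ_t b_t(x)ξ₁ξ₂ξ₃∂/∂ξ_t` on `U₀ ∩ U₁`. -/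
abbrev V : Type := Fin 6 → L

/-- `B₀ = (L₊)⁶`: cochains holomorphic in `U₀`. -/
def B0 : Submodule ℂ V := Submodule.pi Set.univ fun _ => Lplus

/-- The linear map `v ↦ x^m · (v i)`. -/
def cndA (m : ℤ) (i : Fin 6) : V →ₗ[ℂ] L :=
  (LinearMap.mulLeft ℂ (T m)).comp (LinearMap.proj i)

/-- The linear map `v ↦ x^m · (v i − c·x⁻¹·(v j))`. -/
def cndB (m : ℤ) (c : ℂ) (i j : Fin 6) : V →ₗ[ℂ] L :=
  (LinearMap.mulLeft ℂ (T m)).comp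
    (LinearMap.proj i - c • (LinearMap.mulLeft ℂ (T (-1))).comp (LinearMap.proj j))

/-- `B₁`: cochains holomorphic in `U₁`, i.e. `v` with
`x^(kᵢ+kⱼ−2)·a_{ij} ∈ L₋` for all `i < j` and
`x^(d−k_t)·(b_t − σ_t·k_t·x⁻¹·a_{(t)}) ∈ L₋` for `t = 1, 2, 3`
(σ₁ = 1, σ₂ = −1, σ₃ = 1, a₍₁₎ = a₂₃, a₍₂₎ = a₁₃, a₍₃₎ = a₁₂, d = k₁+k₂+k₃). -/
def B1 (k1 k2 k3 : ℤ) : Submodule ℂ V :=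
  Lminus.comap (cndA (k1 + k2 - 2) 0) ⊓
  Lminus.comap (cndA (k1 + k3 - 2) 1) ⊓
  Lminus.comap (cndA (k2 + k3 - 2) 2) ⊓
  Lminus.comap (cndB (k2 + k3) ((k1 : ℂ)) 3 2) ⊓
  Lminus.comap (cndB (k1 + k3) (-(k2 : ℂ)) 4 1) ⊓
  Lminus.comap (cndB (k1 + k2) ((k3 : ℂ)) 5 0)

/-- The coboundary subspace `B = B₀ + B₁`. -/
def B (k1 k2 k3 : ℤ) : Submodule ℂ V := B0 ⊔ B1 k1 k2 k3

/-- Action of `e = ∂/∂x` on cocycles: the componentwise derivative. -/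
def Eop : V → V := fun v i => D (v i)

/-- Action of `f = ∂/∂y` on cocycles, with components
`a_{ij} ↦ (2 − kᵢ − kⱼ)·x·a_{ij} − x²·a_{ij}′` and
`b_t ↦ σ_t·k_t·a₍ₜ₎ − (d − k_t)·x·b_t − x²·b_t′`. -/
def Fop (k1 k2 k3 : ℤ) : V → V := fun v =>
  ![((2 - k1 - k2 : ℤ) : ℂ) • (T 1 * v 0) - T 2 * D (v 0),
    ((2 - k1 - k3 : ℤ) : ℂ) • (T 1 * v 1) - T 2 * D (v 1),
    ((2 - k2 - k3 : ℤ) : ℂ) • (T 1 * v 2) - T 2 * D (v 2),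
    (k1 : ℂ) • v 2 - ((k2 + k3 : ℤ) : ℂ) • (T 1 * v 3) - T 2 * D (v 3),
    -((k2 : ℂ) • v 1) - ((k1 + k3 : ℤ) : ℂ) • (T 1 * v 4) - T 2 * D (v 4),
    (k3 : ℂ) • v 0 - ((k1 + k2 : ℤ) : ℂ) • (T 1 * v 5) - T 2 * D (v 5)]

/-- `N(v) = (0, 0, a₁₃, −b₂, 0, 0)`; `e′ = ∂/∂x + ξ₂∂/∂ξ₁` acts by `E′ = E + N`. -/
def Nop : V → V := fun v => ![0, 0, v 1, -v 4, 0, 0]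

/-- `M(v) = (0, a₂₃, 0, 0, −b₁, 0)`; `f′ = ∂/∂y + η₁∂/∂η₂` acts by `F′ = F + M`. -/
def Mop : V → V := fun v => ![0, v 2, 0, 0, -v 3, 0]

/-- The action `E′ = E + N` of `e′ = ∂/∂x + ξ₂∂/∂ξ₁`. -/
def E'op : V → V := fun v => Eop v + Nop v

/-- The action `F′ = F + M` of `f′ = ∂/∂y + η₁∂/∂η₂`. -/
def F'op (k1 k2 k3 : ℤ) : V → V := fun v => Fop k1 k2 k3 v + Mop v

/-- `N″(v) = (0, a₁₂, a₁₃, −b₂, −b₃, 0)`;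
`e″ = ∂/∂x + ξ₂∂/∂ξ₁ + ξ₃∂/∂ξ₂` acts by `E″ = E + N″`. -/
def N''op : V → V := fun v => ![0, v 0, v 1, -v 4, -v 5, 0]

/-- `M″(v) = (2a₁₃, 2a₂₃, 0, 0, −2b₁, −2b₂)`;
`f″ = ∂/∂y + 2η₁∂/∂η₂ + 2η₂∂/∂η₃` acts by `F″ = F + M″`. -/
def M''op : V → V := fun v => ![(2 : ℂ) • v 1, (2 : ℂ) • v 2, 0, 0, -((2 : ℂ) • v 3), -((2 : ℂ) • v 4)]

/-- The action `E″ = E + N″` of `e″`. -/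
def E''op : V → V := fun v => Eop v + N''op v

/-- The action `F″ = F + M″` of `f″`. -/
def F''op (k1 k2 k3 : ℤ) : V → V := fun v => Fop k1 k2 k3 v + M''op v

/-! ### Auxiliary development -/

lemma coeffL_neg (a : L) (n : ℤ) : coeffL (-a) n = -coeffL a n := by
  unfold coeffL; simp

lemma coeffL_sub (a b : L) (n : ℤ) : coeffL (a - b) n = coeffL a n - coeffL b n := by
  unfold coeffL; simp

@[simp] lemma coeffL_zero' (n : ℤ) : coeffL 0 n = 0 := rfl

lemma coeffL_T' (j n : ℤ) : coeffL (T j) n = if n = j then 1 else 0 := by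
  unfold coeffL
  erw [Finsupp.single_apply]
  simp [eq_comm]

lemma coeffL_T_mul (j : ℤ) (p : L) (n : ℤ) : coeffL (T j * p) n = coeffL p (n - j) := by
  unfold coeffL
  erw [AddMonoidAlgebra.coeff_single_mul_apply]
  rw [one_mul, neg_add_eq_sub]

lemma coeffL_D (p : L) (n : ℤ) : coeffL (D p) n = ((n + 1 : ℤ) : ℂ) * coeffL p (n + 1) := by
  unfold coeffL D
  rw [Finsupp.sum, AddMonoidAlgebra.coeff_sum, Finsupp.finset_sum_apply]
  have h : ∀ m : ℤ, ∀ a : ℂ, (AddMonoidAlgebra.coeff (((m:ℂ) * a) • T (m-1) : L)) n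
      = if m = n + 1 then ((n+1 : ℤ):ℂ) * a else 0 := by
    intro m a
    rw [AddMonoidAlgebra.coeff_smul_apply]
    erw [Finsupp.single_apply]
    by_cases hm : m = n + 1
    · simp [hm, sub_eq_iff_eq_add]
    · have : ¬ (m - 1 = n) := by omega
      simp [this, hm]
  calc (Finsupp.sum (AddMonoidAlgebra.coeff p) fun m a => (AddMonoidAlgebra.coeff (((m:ℂ) * a) • T (m-1) : L)) n)
      = Finsupp.sum (AddMonoidAlgebra.coeff p) (fun m a => if m = n + 1 then ((n+1:ℤ):ℂ) * a else 0) :=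
        Finsupp.sum_congr (fun m _ => h m _)
    _ = ((n+1:ℤ):ℂ) * (AddMonoidAlgebra.coeff p) (n+1) := by
        rw [Finsupp.sum_ite_eq']
        by_cases hs : n + 1 ∈ (AddMonoidAlgebra.coeff p).support
        · simp [hs]
        · simp [hs, Finsupp.notMem_support_iff.mp hs]

lemma L_ext {p q : L} (h : ∀ n, coeffL p n = coeffL q n) : p = q := AddMonoidAlgebra.coeff_injective (Finsupp.ext h)

@[simp] lemma vec6_0 {α : Type*} (a b c d e f : α) : (![a,b,c,d,e,f]) 0 = a := rfl
@[simp] lemma vec6_1 {α : Type*} (a b c d e f : α) : (![a,b,c,d,e,f]) 1 = b := rfl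
@[simp] lemma vec6_2 {α : Type*} (a b c d e f : α) : (![a,b,c,d,e,f]) 2 = c := rfl
@[simp] lemma vec6_3 {α : Type*} (a b c d e f : α) : (![a,b,c,d,e,f]) 3 = d := rfl
@[simp] lemma vec6_4 {α : Type*} (a b c d e f : α) : (![a,b,c,d,e,f]) 4 = e := rfl
@[simp] lemma vec6_5 {α : Type*} (a b c d e f : α) : (![a,b,c,d,e,f]) 5 = f := rfl

lemma mem_Lplus {p : L} : p ∈ Lplus ↔ ∀ n : ℤ, n < 0 → coeffL p n = 0 := Iff.rfl
lemma mem_Lminus {p : L} : p ∈ Lminus ↔ ∀ n : ℤ, 0 < n → coeffL p n = 0 := Iff.rfl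

def posPartL (p : L) : L := AddMonoidAlgebra.ofCoeff (Finsupp.filter (fun n => 0 ≤ n) (AddMonoidAlgebra.coeff p))
def negPartL (p : L) : L := AddMonoidAlgebra.ofCoeff (Finsupp.filter (fun n => ¬ 0 ≤ n) (AddMonoidAlgebra.coeff p))

lemma coeffL_posPartL (p : L) (n : ℤ) :
    coeffL (posPartL p) n = if 0 ≤ n then coeffL p n else 0 := rfl
lemma coeffL_negPartL (p : L) (n : ℤ) :
    coeffL (negPartL p) n = if 0 ≤ n then 0 else coeffL p n := by
  show (Finsupp.filter (fun n : ℤ => ¬ 0 ≤ n) (AddMonoidAlgebra.coeff p)) n = _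
  rw [Finsupp.filter_apply]
  by_cases h : (0:ℤ) ≤ n <;> simp [h] <;> rfl

lemma posPartL_add_negPartL (p : L) : posPartL p + negPartL p = p := by
  apply L_ext
  intro n
  rw [coeffL_add, coeffL_posPartL, coeffL_negPartL]
  by_cases h : (0:ℤ) ≤ n <;> simp [h]

/-- The 12 linear conditions characterizing membership in `B 2 2 2`. -/
def Zp (v : V) : Prop :=
  coeffL (v 0) (-1) = 0 ∧ coeffL (v 1) (-1) = 0 ∧ coeffL (v 2) (-1) = 0 ∧
  coeffL (v 3) (-1) = 0 ∧ coeffL (v 4) (-1) = 0 ∧ coeffL (v 5) (-1) = 0 ∧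
  coeffL (v 3) (-2) = 0 ∧ coeffL (v 4) (-2) = 0 ∧ coeffL (v 5) (-2) = 0 ∧
  coeffL (v 3) (-3) - 2 * coeffL (v 2) (-2) = 0 ∧
  coeffL (v 4) (-3) + 2 * coeffL (v 1) (-2) = 0 ∧
  coeffL (v 5) (-3) - 2 * coeffL (v 0) (-2) = 0

lemma mem_B0_iff (v : V) : v ∈ B0 ↔ ∀ i, ∀ n : ℤ, n < 0 → coeffL (v i) n = 0 := by
  constructor
  · intro h i
    exact mem_Lplus.mp (Submodule.mem_pi.mp h i (Set.mem_univ i))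
  · intro h
    exact Submodule.mem_pi.mpr fun i _ => mem_Lplus.mpr (h i)

lemma mem_B1_iff (v : V) : v ∈ B1 2 2 2 ↔
    (∀ n : ℤ, 0 < n → coeffL (v 0) (n - 2) = 0) ∧
    (∀ n : ℤ, 0 < n → coeffL (v 1) (n - 2) = 0) ∧
    (∀ n : ℤ, 0 < n → coeffL (v 2) (n - 2) = 0) ∧
    (∀ n : ℤ, 0 < n → coeffL (v 3) (n - 4) - 2 * coeffL (v 2) (n - 3) = 0) ∧
    (∀ n : ℤ, 0 < n → coeffL (v 4) (n - 4) + 2 * coeffL (v 1) (n - 3) = 0) ∧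
    (∀ n : ℤ, 0 < n → coeffL (v 5) (n - 4) - 2 * coeffL (v 0) (n - 3) = 0) := by
  have hA : ∀ (m : ℤ) (i : Fin 6), cndA m i v = T m * v i := fun _ _ => rfl
  have hB : ∀ (m : ℤ) (c : ℂ) (i j : Fin 6),
      cndB m c i j v = T m * (v i - c • (T (-1) * v j)) := fun _ _ _ _ => rfl
  constructor
  · intro h
    simp only [B1, Submodule.mem_inf, Submodule.mem_comap] at h
    obtain ⟨⟨⟨⟨⟨h1, h2⟩, h3⟩, h4⟩, h5⟩, h6⟩ := h
    rw [hA] at h1 h2 h3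
    rw [hB] at h4 h5 h6
    rw [mem_Lminus] at h1 h2 h3 h4 h5 h6
    refine ⟨fun n hn => ?_, fun n hn => ?_, fun n hn => ?_,
            fun n hn => ?_, fun n hn => ?_, fun n hn => ?_⟩
    · have := h1 n hn; rw [coeffL_T_mul, show n - (2+2-2:ℤ) = n - 2 by ring] at this
      exact this
    · have := h2 n hn; rw [coeffL_T_mul, show n - (2+2-2:ℤ) = n - 2 by ring] at this
      exact this
    · have := h3 n hn; rw [coeffL_T_mul, show n - (2+2-2:ℤ) = n - 2 by ring] at this
      exact this
    · have := h4 n hn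
      rw [coeffL_T_mul, coeffL_sub, coeffL_smul, coeffL_T_mul,
        show n - (2+2:ℤ) = n - 4 by ring, show n - 4 - (-1:ℤ) = n - 3 by ring] at this
      push_cast at this
      linear_combination this
    · have := h5 n hn
      rw [coeffL_T_mul, coeffL_sub, coeffL_smul, coeffL_T_mul,
        show n - (2+2:ℤ) = n - 4 by ring, show n - 4 - (-1:ℤ) = n - 3 by ring] at this
      push_cast at this
      linear_combination this
    · have := h6 n hn
      rw [coeffL_T_mul, coeffL_sub, coeffL_smul, coeffL_T_mul,
        show n - (2+2:ℤ) = n - 4 by ring, show n - 4 - (-1:ℤ) = n - 3 by ring] at this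
      push_cast at this
      linear_combination this
  · rintro ⟨h1, h2, h3, h4, h5, h6⟩
    simp only [B1, Submodule.mem_inf, Submodule.mem_comap]
    refine ⟨⟨⟨⟨⟨?_, ?_⟩, ?_⟩, ?_⟩, ?_⟩, ?_⟩ <;>
      [skip; skip; skip; rw [hB]; rw [hB]; rw [hB]] <;>
      first
        | (rw [hA]; rw [mem_Lminus]; intro n hn; rw [coeffL_T_mul,
             show n - (2+2-2:ℤ) = n - 2 by ring]
           first | exact h1 n hn | exact h2 n hn | exact h3 n hn)
        | (rw [mem_Lminus]; intro n hn
           rw [coeffL_T_mul, coeffL_sub, coeffL_smul, coeffL_T_mul,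
             show n - (2+2:ℤ) = n - 4 by ring, show n - 4 - (-1:ℤ) = n - 3 by ring]
           push_cast
           first
             | linear_combination h4 n hn
             | linear_combination h5 n hn
             | linear_combination h6 n hn)

lemma memB_iff (v : V) : v ∈ B 2 2 2 ↔ Zp v := by
  constructor
  · intro h
    rcases Submodule.mem_sup.mp h with ⟨p, hp, q, hq, rfl⟩
    rw [mem_B0_iff] at hp
    rw [mem_B1_iff] at hq
    obtain ⟨q1, q2, q3, q4, q5, q6⟩ := hq
    have c0m1 : coeffL (q 0) (-1) = 0 := by have := q1 1 one_pos; norm_num at this; exact this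
    have c1m1 : coeffL (q 1) (-1) = 0 := by have := q2 1 one_pos; norm_num at this; exact this
    have c2m1 : coeffL (q 2) (-1) = 0 := by have := q3 1 one_pos; norm_num at this; exact this
    have c0z : coeffL (q 0) 0 = 0 := by have := q1 2 two_pos; norm_num at this; exact this
    have c1z : coeffL (q 1) 0 = 0 := by have := q2 2 two_pos; norm_num at this; exact this
    have c2z : coeffL (q 2) 0 = 0 := by have := q3 2 two_pos; norm_num at this; exact this
    have r4a := q4 3 (by norm_num); have r4b := q4 2 (by norm_num)
    have r4c := q4 1 one_pos
    have r5a := q5 3 (by norm_num); have r5b := q5 2 (by norm_num)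
    have r5c := q5 1 one_pos
    have r6a := q6 3 (by norm_num); have r6b := q6 2 (by norm_num)
    have r6c := q6 1 one_pos
    norm_num at r4a r4b r4c r5a r5b r5c r6a r6b r6c
    have c3m1 : coeffL (q 3) (-1) = 0 := by linear_combination r4a + 2 * c2z
    have c4m1 : coeffL (q 4) (-1) = 0 := by linear_combination r5a - 2 * c1z
    have c5m1 : coeffL (q 5) (-1) = 0 := by linear_combination r6a + 2 * c0z
    have c3m2 : coeffL (q 3) (-2) = 0 := by linear_combination r4b + 2 * c2m1
    have c4m2 : coeffL (q 4) (-2) = 0 := by linear_combination r5b - 2 * c1m1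
    have c5m2 : coeffL (q 5) (-2) = 0 := by linear_combination r6b + 2 * c0m1
    have hP : ∀ (i : Fin 6) (n : ℤ), n < 0 → coeffL ((p + q) i) n = coeffL (q i) n := by
      intro i n hn
      have : (p + q) i = p i + q i := rfl
      rw [this, coeffL_add, hp i n hn, zero_add]
    refine ⟨?_, ?_, ?_, ?_, ?_, ?_, ?_, ?_, ?_, ?_, ?_, ?_⟩ <;>
      rw [hP _ _ (by norm_num)]
    · exact c0m1
    · exact c1m1
    · exact c2m1
    · exact c3m1
    · exact c4m1
    · exact c5m1
    · exact c3m2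
    · exact c4m2
    · exact c5m2
    · rw [hP _ _ (by norm_num)]; linear_combination r4c
    · rw [hP _ _ (by norm_num)]; linear_combination r5c
    · rw [hP _ _ (by norm_num)]; linear_combination r6c
  · rintro ⟨z1, z2, z3, z4, z5, z6, z7, z8, z9, z10, z11, z12⟩
    apply Submodule.mem_sup.mpr
    refine ⟨fun i => posPartL (v i), ?_, fun i => negPartL (v i), ?_, ?_⟩
    · rw [mem_B0_iff]
      intro i n hn
      rw [coeffL_posPartL, if_neg (by omega)]
    · rw [mem_B1_iff]
      refine ⟨fun n hn => ?_, fun n hn => ?_, fun n hn => ?_,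
              fun n hn => ?_, fun n hn => ?_, fun n hn => ?_⟩
      · rw [coeffL_negPartL]
        by_cases h : (0:ℤ) ≤ n - 2
        · rw [if_pos h]
        · have : n = 1 := by omega
          subst this
          norm_num
          exact z1
      · rw [coeffL_negPartL]
        by_cases h : (0:ℤ) ≤ n - 2
        · rw [if_pos h]
        · have : n = 1 := by omega
          subst this
          norm_num
          exact z2
      · rw [coeffL_negPartL]
        by_cases h : (0:ℤ) ≤ n - 2
        · rw [if_pos h]
        · have : n = 1 := by omega
          subst this
          norm_num
          exact z3
      · rw [coeffL_negPartL, coeffL_negPartL]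
        by_cases h : (0:ℤ) ≤ n - 4
        · rw [if_pos h, if_pos (by omega)]; ring
        · have : n = 1 ∨ n = 2 ∨ n = 3 := by omega
          rcases this with rfl | rfl | rfl <;> norm_num
          · linear_combination z10
          · linear_combination z7 - 2 * z3
          · linear_combination z4
      · rw [coeffL_negPartL, coeffL_negPartL]
        by_cases h : (0:ℤ) ≤ n - 4
        · rw [if_pos h, if_pos (by omega)]; ring
        · have : n = 1 ∨ n = 2 ∨ n = 3 := by omega
          rcases this with rfl | rfl | rfl <;> norm_num
          · linear_combination z11
          · linear_combination z8 + 2 * z2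
          · linear_combination z5
      · rw [coeffL_negPartL, coeffL_negPartL]
        by_cases h : (0:ℤ) ≤ n - 4
        · rw [if_pos h, if_pos (by omega)]; ring
        · have : n = 1 ∨ n = 2 ∨ n = 3 := by omega
          rcases this with rfl | rfl | rfl <;> norm_num
          · linear_combination z12
          · linear_combination z9 - 2 * z1
          · linear_combination z6
    · funext i
      show posPartL (v i) + negPartL (v i) = v i
      exact posPartL_add_negPartL (v i)


/-- For `(k₁, k₂, k₃) = (2, 2, 2)`, the 𝔰″-invariant part of `H¹(ℂℙ¹, T₂)` is
one-dimensional, spanned by the class of `w = (0, 0, 0, (1/2)x⁻¹, −(1/2)x⁻², x⁻³)`. -/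
theorem stmt_11 (w : V)
    (hw : w = ![0, 0, 0, (1 / 2 : ℂ) • T (-1), -((1 / 2 : ℂ) • T (-2)), T (-3)]) :
    E''op w ∈ B 2 2 2 ∧ F''op 2 2 2 w ∈ B 2 2 2 ∧ w ∉ B 2 2 2 ∧
    ∀ z : V, E''op z ∈ B 2 2 2 → F''op 2 2 2 z ∈ B 2 2 2 →
      ∃ c : ℂ, z - c • w ∈ B 2 2 2 := by
  subst hw
  refine ⟨?_, ?_, ?_, ?_⟩
  · refine (memB_iff _).mpr ⟨?_, ?_, ?_, ?_, ?_, ?_, ?_, ?_, ?_, ?_, ?_, ?_⟩ <;>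
      norm_num [E''op, Eop, N''op, Pi.add_apply, coeffL_add, coeffL_neg,
        coeffL_smul, coeffL_D, coeffL_T']
  · refine (memB_iff _).mpr ⟨?_, ?_, ?_, ?_, ?_, ?_, ?_, ?_, ?_, ?_, ?_, ?_⟩ <;>
      · simp only [F''op, Fop, M''op, Pi.add_apply, vec6_0, vec6_1, vec6_2, vec6_3, vec6_4,
          vec6_5, coeffL_add, coeffL_sub, coeffL_neg, coeffL_smul, coeffL_D, coeffL_T_mul,
          coeffL_T', coeffL_zero']
        norm_num
  · intro hmem
    obtain ⟨-, -, -, h4, -⟩ := (memB_iff _).mp hmem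
    rw [vec6_3, coeffL_smul, coeffL_T'] at h4
    norm_num at h4
  · intro z hE hF
    obtain ⟨e1, e2, e3, e4, e5, e6, e7, e8, e9, e10, e11, e12⟩ := (memB_iff _).mp hE
    obtain ⟨f1, f2, f3, f4, f5, f6, f7, f8, f9, f10, f11, f12⟩ := (memB_iff _).mp hF
    simp only [E''op, Eop, N''op, Pi.add_apply, vec6_0, vec6_1, vec6_2, vec6_3, vec6_4,
      vec6_5, coeffL_add, coeffL_neg, coeffL_smul, coeffL_D] at e2 e3 e4 e5 e7 e8 e10 e11
    simp only [F''op, Fop, M''op, Pi.add_apply, vec6_0, vec6_1, vec6_2, vec6_3, vec6_4,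
      vec6_5, coeffL_add, coeffL_sub, coeffL_neg, coeffL_smul, coeffL_D,
      coeffL_T_mul] at f2 f4 f5 f7 f8 f9
    norm_num at e2 e3 e4 e5 e7 e8 e10 e11 f2 f4 f5 f7 f8 f9
    have hz3m2 : coeffL (z 3) (-2) = 0 := by linear_combination -(1/2 : ℂ) * f4 + f2
    have hz5m2 : coeffL (z 5) (-2) = 0 := by linear_combination -e8 - e4
    have hz4m2 : coeffL (z 4) (-2) = -coeffL (z 3) (-1) := by linear_combination -e7
    have hR1 : coeffL (z 3) (-3) - 2 * coeffL (z 2) (-2) = 0 := by linear_combination -f7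
    have hR2 : coeffL (z 4) (-3) + 2 * coeffL (z 1) (-2) = 0 := by
      linear_combination -f8 - 2 * hz3m2
    have hR3 : coeffL (z 5) (-3) - 2 * coeffL (z 0) (-2) = 2 * coeffL (z 3) (-1) := by
      linear_combination -f9 - 2 * hz4m2
    refine ⟨2 * coeffL (z 3) (-1), (memB_iff _).mpr ⟨?_, ?_, ?_, ?_, ?_, ?_, ?_, ?_, ?_, ?_, ?_, ?_⟩⟩ <;>
      simp only [Pi.sub_apply, Pi.smul_apply, vec6_0, vec6_1, vec6_2, vec6_3, vec6_4, vec6_5,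
        coeffL_sub, coeffL_smul, coeffL_neg, coeffL_T', coeffL_zero', smul_zero] <;>
      norm_num
    · exact e2
    · exact e3
    · exact f2
    · ring
    · exact e4
    · exact e5
    · exact hz3m2
    · linear_combination hz4m2
    · exact hz5m2
    · exact hR1
    · exact hR2
    · linear_combination hR3
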